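/- Consider the repeated guessing game with reward Π(x,a,b) = 1{a = x and b = x}, source X ∼ Bernoulli(1/2), and actions a, b ∈ {0,1}. The maximum of E[Π(X,A,B)] = P(A = X, B = X) over all joint distributions of (X,A,B) with X ∼ Bernoulli(1/2) satisfying H(A|X,B) ≥ I(X;B) is strictly greater than 3/4. -/

import Mathlib

open scoped Classical BigOperators

noncomputable section

namespace Coord

variable {Ω : Type*} [Fintype Ω]

/-- `p` is a probability mass function on the finite sample space `Ω`. -/
def IsPmf (p : Ω → ℝ) : Prop := (∀ ω, 0 ≤ p ω) ∧ ∑ ω, p ω = 1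

/-- Distribution (pmf) of the random variable `X` under `p`. -/
def dist (p : Ω → ℝ) {α : Type*} [Fintype α] (X : Ω → α) (a : α) : ℝ :=
  ∑ ω, if X ω = a then p ω else 0

/-- Shannon entropy (base 2) of `X` under `p`. -/
def H (p : Ω → ℝ) {α : Type*} [Fintype α] (X : Ω → α) : ℝ :=
  -∑ a, dist p X a * Real.logb 2 (dist p X a)

/-- Conditional entropy `H(X | Y)`. -/
def Hc (p : Ω → ℝ) {α β : Type*} [Fintype α] [Fintype β] (X : Ω → α) (Y : Ω → β) : ℝ :=
  H p (fun ω => (X ω, Y ω)) - H p Y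

/-- Mutual information `I(X ; Y)`. -/
def MI (p : Ω → ℝ) {α β : Type*} [Fintype α] [Fintype β] (X : Ω → α) (Y : Ω → β) : ℝ :=
  H p X + H p Y - H p (fun ω => (X ω, Y ω))

/-- Conditional mutual information `I(X ; Y | Z)`. -/
def MIc (p : Ω → ℝ) {α β γ : Type*} [Fintype α] [Fintype β] [Fintype γ]
    (X : Ω → α) (Y : Ω → β) (Z : Ω → γ) : ℝ :=
  H p (fun ω => (X ω, Z ω)) + H p (fun ω => (Y ω, Z ω))
    - H p (fun ω => (X ω, Y ω, Z ω)) - H p Z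

/-- `X` and `Y` are independent under `p`. -/
def Indep (p : Ω → ℝ) {α β : Type*} [Fintype α] [Fintype β] (X : Ω → α) (Y : Ω → β) : Prop :=
  ∀ a b, dist p (fun ω => (X ω, Y ω)) (a, b) = dist p X a * dist p Y b

/-- Markov chain `X - A - B` : `X` and `B` are conditionally independent given `A`. -/
def Markov (p : Ω → ℝ) {α β γ : Type*} [Fintype α] [Fintype β] [Fintype γ]
    (X : Ω → α) (A : Ω → β) (B : Ω → γ) : Prop :=
  ∀ x a b, dist p (fun ω => (X ω, A ω, B ω)) (x, a, b) * dist p A a =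
    dist p (fun ω => (X ω, A ω)) (x, a) * dist p (fun ω => (A ω, B ω)) (a, b)

/-- The random vector `X` is i.i.d. with per-coordinate marginal `p0`. -/
def IID {n : ℕ} (p : Ω → ℝ) {𝒳 : Type*} [Fintype 𝒳] (X : Ω → Fin n → 𝒳) (p0 : 𝒳 → ℝ) : Prop :=
  ∀ x : Fin n → 𝒳, dist p X x = ∏ i, p0 (x i)

/-- The joint pmf on `Ω × Fin n` obtained by adjoining a uniform, independent time index `Q`. -/
def unif {n : ℕ} (p : Ω → ℝ) : Ω × Fin n → ℝ := fun ωq => p ωq.1 / n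

/-- The strict prefix `X^{q-1}` of a random vector, padded with `none`. -/
def pre {n : ℕ} {𝒳 : Type*} (X : Ω → Fin n → 𝒳) (q : Fin n) : Ω → Fin n → Option 𝒳 :=
  fun ω i => if (i : ℕ) < (q : ℕ) then some (X ω i) else none

end Coord

open Coord
/-- Auxiliary pmf: `P(A = B = X = x) = 2/5` for each `x`, all other atoms get `1/30`. -/
def stmt15q : Bool × Bool × Bool → ℝ :=
  fun ω => if ω.2.1 = ω.1 ∧ ω.2.2 = ω.1 then 2/5 else 1/30

/-- For the guessing game with `X ∼ Bernoulli(1/2)`, there is a feasible joint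
distribution of `(X,A,B)` (i.e. satisfying `H(A|X,B) ≥ I(X;B)`) with `P(A = X = B) > 3/4`. -/

theorem stmt15 :
    ∃ q : Bool × Bool × Bool → ℝ, IsPmf q ∧
      (∀ x, dist q (fun ω : Bool × Bool × Bool => ω.1) x = 1 / 2) ∧
      Hc q (fun ω : Bool × Bool × Bool => ω.2.1) (fun ω => (ω.1, ω.2.2)) ≥
        MI q (fun ω : Bool × Bool × Bool => ω.1) (fun ω => ω.2.2) ∧
      (∑ ω : Bool × Bool × Bool, if ω.2.1 = ω.1 ∧ ω.2.2 = ω.1 then q ω else 0) > 3 / 4 := by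
  refine ⟨stmt15q, ⟨fun ω => ?_, ?_⟩, fun x => ?_, ?_, ?_⟩
  · unfold stmt15q; split <;> norm_num
  · simp [stmt15q, Fintype.sum_prod_type, Fintype.sum_bool]; norm_num
  · cases x <;> (simp [Coord.dist, stmt15q, Fintype.sum_prod_type, Fintype.sum_bool]; norm_num)
  · have hX : H stmt15q (fun ω : Bool × Bool × Bool => ω.1) = 1 := by
      simp [Coord.H, Coord.dist, stmt15q, Fintype.sum_prod_type, Fintype.sum_bool]
      norm_num
      rw [show (1:ℝ)/2 = 2⁻¹ by norm_num, Real.logb_inv, Real.logb_self_eq_one] <;> norm_num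
    have hB : H stmt15q (fun ω : Bool × Bool × Bool => ω.2.2) = 1 := by
      simp [Coord.H, Coord.dist, stmt15q, Fintype.sum_prod_type, Fintype.sum_bool]
      norm_num
      rw [show (1:ℝ)/2 = 2⁻¹ by norm_num, Real.logb_inv, Real.logb_self_eq_one] <;> norm_num
    have hJ : H stmt15q (fun ω : Bool × Bool × Bool => (ω.2.1, ω.1, ω.2.2)) =
        -(4/5 * Real.logb 2 (2/5) + 1/5 * Real.logb 2 (1/30)) := by
      simp [Coord.H, Coord.dist, stmt15q, Fintype.sum_prod_type, Fintype.sum_bool]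
      ring_nf
    have key : 14 * Real.log 2 ≤ 4 * Real.log 5 + Real.log 30 := by
      have e1 : Real.log 16384 = 14 * Real.log 2 := by
        rw [show (16384:ℝ) = 2^14 by norm_num, Real.log_pow]; norm_num
      have e2 : Real.log 18750 = 4 * Real.log 5 + Real.log 30 := by
        rw [show (18750:ℝ) = 5^4 * 30 by norm_num,
          Real.log_mul (by norm_num) (by norm_num), Real.log_pow]; norm_num
      have := Real.log_le_log (by norm_num : (0:ℝ) < 16384) (by norm_num : (16384:ℝ) ≤ 18750)
      linarith
    have hineq : -(4/5 * Real.logb 2 (2/5) + 1/5 * Real.logb 2 (1/30)) ≥ 2 := by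
      have l2 : (0:ℝ) < Real.log 2 := Real.log_pos (by norm_num)
      have h1 : Real.log (2/5) = Real.log 2 - Real.log 5 :=
        Real.log_div (by norm_num) (by norm_num)
      have h2 : Real.log ((1:ℝ)/30) = -Real.log 30 := by rw [one_div, Real.log_inv]
      rw [ge_iff_le, Real.logb, Real.logb, h1, h2]
      have hne : Real.log 2 ≠ 0 := ne_of_gt l2
      field_simp
      try rw [le_div_iff₀ (by positivity : (0:ℝ) < 5 * Real.log 2)]
      linarith
    simp only [Coord.Hc, Coord.MI]
    linarith [hX, hB, hJ, hineq]
  · simp [stmt15q, Fintype.sum_prod_type, Fintype.sum_bool]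
    norm_num
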